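/- Let H be a Hilbert space and L1, L2, L3, L4 closed subspaces such that (L2 ∨ L4) ∩ (L3 ∨ L4) = L4 and L2 ∨ L3 is separable. If L1 ⊥ L2 | (L3 ∨ L4) and L1 ⊥ L3 | (L2 ∨ L4), then L1 ⊥ (L2 ∨ L3) | L4 (intersection property of conditional orthogonality). -/

import Mathlib

open scoped InnerProductSpace

/-- Auxiliary: conditional orthogonality `L1 ⊥ A | (B ∨ L4)` implies that for `x ∈ L1`, the
residual `x - P_{B ∨ L4} x` is orthogonal to `A ⊔ B ⊔ L4`. -/
lemma condOrth_aux {H : Type*} [NormedAddCommGroup H] [InnerProductSpace ℂ H]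
    [CompleteSpace H] (L1 A B L4 : Submodule ℂ H)
    (hco : ∀ x ∈ L1, ∀ y ∈ A,
      ⟪x - (Submodule.orthogonalProjectionOnto ((B ⊔ L4).topologicalClosure) x : H),
        y - (Submodule.orthogonalProjectionOnto ((B ⊔ L4).topologicalClosure) y : H)⟫_ℂ = 0)
    {x : H} (hx : x ∈ L1) :
    x - (Submodule.orthogonalProjectionOnto ((B ⊔ L4).topologicalClosure) x : H) ∈ (A ⊔ B ⊔ L4)ᗮ := by
  set M := (B ⊔ L4).topologicalClosure with hM
  set r := x - (Submodule.orthogonalProjectionOnto M x : H) with hr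
  have hxm : r ∈ Mᗮ := by
    have := M.sub_starProjection_mem_orthogonal x
    rw [Submodule.starProjection_apply] at this
    exact this
  have hBL : B ⊔ L4 ≤ M := Submodule.le_topologicalClosure _
  have hA : ∀ y2 ∈ A, ⟪y2, r⟫_ℂ = 0 := by
    intro y2 hy2
    have h0 := hco x hx y2 hy2
    rw [inner_sub_right] at h0
    have h1 : ⟪r, (Submodule.orthogonalProjectionOnto M y2 : H)⟫_ℂ = 0 := by
      rw [← inner_conj_symm, hxm _ (Submodule.orthogonalProjectionOnto M y2).2, map_zero]
    rw [h1, sub_zero] at h0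
    rw [← inner_conj_symm, h0, map_zero]
  intro u hu
  rcases Submodule.mem_sup.mp hu with ⟨a, ha', b, hb', rfl⟩
  rcases Submodule.mem_sup.mp ha' with ⟨a2, ha2, a3, ha3, rfl⟩
  have e3 : ⟪a3, r⟫_ℂ = 0 := hxm _ (hBL (Submodule.mem_sup_left ha3))
  have eb : ⟪b, r⟫_ℂ = 0 := hxm _ (hBL (Submodule.mem_sup_right hb'))
  rw [inner_add_left, inner_add_left, hA a2 ha2, e3, eb]
  ring

/-- Abstract core of the intersection property. -/
lemma condOrth_core {H : Type*} [NormedAddCommGroup H] [InnerProductSpace ℂ H]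
    (L4 K M2 M3 : Submodule ℂ H) [CompleteSpace L4] [CompleteSpace M2] [CompleteSpace M3]
    (hM2 : M2 ≤ Kᗮᗮ) (hM3 : M3 ≤ Kᗮᗮ) (hL4K : L4 ≤ K)
    (hinter : M2 ⊓ M3 = L4) (x y : H) (hy : y ∈ Kᗮᗮ)
    (k2 : x - (Submodule.orthogonalProjectionOnto M3 x : H) ∈ Kᗮ)
    (k3 : x - (Submodule.orthogonalProjectionOnto M2 x : H) ∈ Kᗮ) :
    ⟪x - (Submodule.orthogonalProjectionOnto L4 x : H), y - (Submodule.orthogonalProjectionOnto L4 y : H)⟫_ℂ = 0 := by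
  set z3 := (Submodule.orthogonalProjectionOnto M3 x : H) with hz3
  set z2 := (Submodule.orthogonalProjectionOnto M2 x : H) with hz2
  have hzz : z3 = z2 := by
    have hmem : z3 - z2 ∈ Kᗮ := by
      have := Kᗮ.sub_mem k3 k2
      have e : x - z2 - (x - z3) = z3 - z2 := by abel
      rwa [e] at this
    have hmem' : z3 - z2 ∈ Kᗮᗮ :=
      Submodule.sub_mem Kᗮᗮ (hM3 (Submodule.orthogonalProjectionOnto M3 x).2) (hM2 (Submodule.orthogonalProjectionOnto M2 x).2)
    have : ⟪z3 - z2, z3 - z2⟫_ℂ = 0 := hmem' _ hmem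
    rw [inner_self_eq_zero, sub_eq_zero] at this
    exact this
  have hz4 : z3 ∈ L4 := by
    rw [← hinter]
    exact ⟨hzz ▸ (Submodule.orthogonalProjectionOnto M2 x).2, (Submodule.orthogonalProjectionOnto M3 x).2⟩
  have hproj : (Submodule.orthogonalProjectionOnto L4 x : H) = z3 := by
    rw [← Submodule.starProjection_apply]
    refine Submodule.eq_starProjection_of_mem_of_inner_eq_zero hz4 fun w hw => ?_
    rw [← inner_conj_symm, k2 _ (hL4K hw), map_zero]
  rw [hproj]
  have hmem : y - (Submodule.orthogonalProjectionOnto L4 y : H) ∈ Kᗮᗮ :=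
    Submodule.sub_mem Kᗮᗮ hy (Submodule.le_orthogonal_orthogonal K (hL4K (Submodule.orthogonalProjectionOnto L4 y).2))
  exact hmem _ k2

/-- Conditional orthogonality: `L1 ⊥ L2 | L3`. -/
def CondOrth {H : Type*} [NormedAddCommGroup H] [InnerProductSpace ℂ H]
    (L1 L2 L3 : Submodule ℂ H) [CompleteSpace L3] : Prop :=
  ∀ x ∈ L1, ∀ y ∈ L2,
    ⟪x - (Submodule.orthogonalProjectionOnto L3 x : H), y - (Submodule.orthogonalProjectionOnto L3 y : H)⟫_ℂ = 0

set_option maxHeartbeats 1000000 in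
/-- Intersection property of conditional orthogonality: if
`(L2 ∨ L4) ∩ (L3 ∨ L4) = L4`, `L2 ∨ L3` is separable, `L1 ⊥ L2 | (L3 ∨ L4)` and
`L1 ⊥ L3 | (L2 ∨ L4)`, then `L1 ⊥ (L2 ∨ L3) | L4`. -/
theorem condOrth_intersection {H : Type*} [NormedAddCommGroup H] [InnerProductSpace ℂ H]
    [CompleteSpace H] (L1 L2 L3 L4 : Submodule ℂ H)
    (h1 : IsClosed (L1 : Set H)) (h2 : IsClosed (L2 : Set H))
    (h3 : IsClosed (L3 : Set H)) (h4 : IsClosed (L4 : Set H))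
    [CompleteSpace L4]
    (hinter : (L2 ⊔ L4).topologicalClosure ⊓ (L3 ⊔ L4).topologicalClosure = L4)
    (hsep : TopologicalSpace.SeparableSpace ((L2 ⊔ L3).topologicalClosure : Submodule ℂ H))
    (ha : CondOrth L1 L2 ((L3 ⊔ L4).topologicalClosure))
    (hb : CondOrth L1 L3 ((L2 ⊔ L4).topologicalClosure)) :
    CondOrth L1 ((L2 ⊔ L3).topologicalClosure) L4 := by
  intro x hx y hy
  have hKle : L2 ⊔ L3 ⊔ L4 ≤ (L2 ⊔ L3 ⊔ L4)ᗮᗮ :=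
    Submodule.le_orthogonal_orthogonal _
  have hclos : ∀ S : Submodule ℂ H, S ≤ L2 ⊔ L3 ⊔ L4 →
      S.topologicalClosure ≤ (L2 ⊔ L3 ⊔ L4)ᗮᗮ := fun S hS =>
    S.topologicalClosure_minimal (hS.trans hKle) (L2 ⊔ L3 ⊔ L4)ᗮ.isClosed_orthogonal
  have h24 : L2 ⊔ L4 ≤ L2 ⊔ L3 ⊔ L4 :=
    sup_le (le_sup_left.trans le_sup_left) le_sup_right
  have h34 : L3 ⊔ L4 ≤ L2 ⊔ L3 ⊔ L4 :=
    sup_le (le_sup_right.trans le_sup_left) le_sup_right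
  refine condOrth_core L4 (L2 ⊔ L3 ⊔ L4) _ _ (hclos _ h24) (hclos _ h34)
    le_sup_right hinter x y (hclos _ le_sup_left hy) ?_ ?_
  · exact condOrth_aux L1 L2 L3 L4 ha hx
  · have := condOrth_aux L1 L3 L2 L4 hb hx
    rwa [sup_comm L3 L2] at this
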